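/- Let A(x) = Σ aₙ xⁿ and B(x) = Σ bₙ xⁿ be power series convergent for |x| < R, with bₙ > 0 for all n. If the sequence aₙ/bₙ is strictly increasing, then the function A(x)/B(x) is strictly increasing on (0, R). -/
import Mathlib


open Set

lemma abs_summable_aux (a : ℕ → ℝ) (R : ℝ) (hR : 0 < R)
    (hA : ∀ x : ℝ, |x| < R → Summable (fun n => a n * x ^ n))
    {x : ℝ} (hx0 : 0 ≤ x) (hxR : x < R) :
    Summable (fun n => |a n| * x ^ n) := by
  set r : ℝ := (x + R) / 2 with hr
  have hxr : x < r := by rw [hr]; linarith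
  have hrR : r < R := by rw [hr]; linarith
  have hrpos : 0 < r := by rw [hr]; linarith
  have hs := hA r (by rwa [abs_of_pos hrpos])
  have htend : Filter.Tendsto (fun n => |a n * r ^ n|) Filter.atTop (nhds 0) := by
    simpa using hs.tendsto_atTop_zero.abs
  obtain ⟨C, hC⟩ := htend.bddAbove_range
  have hC' : ∀ n, |a n * r ^ n| ≤ C := fun n => hC ⟨n, rfl⟩
  have hq0 : 0 ≤ x / r := div_nonneg hx0 hrpos.le
  have hq1 : x / r < 1 := (div_lt_one hrpos).2 hxr
  have hgeo : Summable (fun n => C * (x / r) ^ n) :=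
    (summable_geometric_of_lt_one hq0 hq1).mul_left C
  refine Summable.of_nonneg_of_le (fun n => by positivity) (fun n => ?_) hgeo
  have hx_eq : x ^ n = r ^ n * (x / r) ^ n := by
    rw [← mul_pow, mul_div_cancel₀ _ hrpos.ne']
  calc |a n| * x ^ n = |a n * r ^ n| * (x / r) ^ n := by
        rw [hx_eq, abs_mul, abs_of_pos (pow_pos hrpos n)]; ring
    _ ≤ C * (x / r) ^ n :=
        mul_le_mul_of_nonneg_right (hC' n) (pow_nonneg hq0 n)

set_option maxHeartbeats 1000000 in
theorem power_series_ratio_strict_mono (a b : ℕ → ℝ) (R : ℝ) (hR : 0 < R)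
    (hA : ∀ x : ℝ, |x| < R → Summable (fun n => a n * x ^ n))
    (hB : ∀ x : ℝ, |x| < R → Summable (fun n => b n * x ^ n))
    (hb : ∀ n, 0 < b n)
    (hratio : StrictMono (fun n => a n / b n)) :
    StrictMonoOn (fun x => (∑' n, a n * x ^ n) / (∑' n, b n * x ^ n)) (Ioo 0 R) := by
  intro x hx y hy hxy
  obtain ⟨hx0, hxR⟩ := hx
  obtain ⟨hy0, hyR⟩ := hy
  -- absolute summability
  have habs : ∀ (c : ℕ → ℝ) (z : ℝ), 0 < z → (∀ n, ‖c n * z ^ n‖ = |c n| * z ^ n) := by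
    intro c z hz0 n
    rw [Real.norm_eq_abs, abs_mul, abs_of_pos (pow_pos hz0 n)]
  have hAx : Summable (fun n => ‖a n * x ^ n‖) := by
    simpa only [habs a x hx0] using abs_summable_aux a R hR hA hx0.le hxR
  have hAy : Summable (fun n => ‖a n * y ^ n‖) := by
    simpa only [habs a y hy0] using abs_summable_aux a R hR hA hy0.le hyR
  have hBx : Summable (fun n => ‖b n * x ^ n‖) := by
    simpa only [habs b x hx0] using abs_summable_aux b R hR hB hx0.le hxR
  have hBy : Summable (fun n => ‖b n * y ^ n‖) := by
    simpa only [habs b y hy0] using abs_summable_aux b R hR hB hy0.le hyR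
  have hBxs := hB x (by rw [abs_of_pos hx0]; exact hxR)
  have hBys := hB y (by rw [abs_of_pos hy0]; exact hyR)
  have hBxpos : 0 < ∑' n, b n * x ^ n :=
    Summable.tsum_pos hBxs (fun n => (mul_pos (hb n) (pow_pos hx0 n)).le) 0
      (mul_pos (hb 0) (pow_pos hx0 0))
  have hBypos : 0 < ∑' n, b n * y ^ n :=
    Summable.tsum_pos hBys (fun n => (mul_pos (hb n) (pow_pos hy0 n)).le) 0
      (mul_pos (hb 0) (pow_pos hy0 0))
  simp only
  rw [div_lt_div_iff₀ hBxpos hBypos, ← sub_pos]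
  -- reduce to positivity of a double sum
  set G : ℕ × ℕ → ℝ := fun p =>
    a p.1 * y ^ p.1 * (b p.2 * x ^ p.2) - a p.1 * x ^ p.1 * (b p.2 * y ^ p.2) with hG
  have hsum1 : Summable (fun p : ℕ × ℕ => a p.1 * y ^ p.1 * (b p.2 * x ^ p.2)) :=
    summable_mul_of_summable_norm hAy hBx
  have hsum2 : Summable (fun p : ℕ × ℕ => a p.1 * x ^ p.1 * (b p.2 * y ^ p.2)) :=
    summable_mul_of_summable_norm hAx hBy
  have hGsum : Summable G := hsum1.sub hsum2
  have key : (∑' n, a n * y ^ n) * (∑' n, b n * x ^ n) -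
      (∑' n, a n * x ^ n) * (∑' n, b n * y ^ n) = ∑' p, G p := by
    rw [tsum_mul_tsum_of_summable_norm hAy hBx, tsum_mul_tsum_of_summable_norm hAx hBy]
    exact (Summable.tsum_sub hsum1 hsum2).symm
  rw [key]
  -- symmetrize
  have hGswap : Summable (fun p : ℕ × ℕ => G p.swap) := hGsum.prod_symm
  have hswap_eq : ∑' p : ℕ × ℕ, G p.swap = ∑' p, G p := by
    exact ((Equiv.prodComm ℕ ℕ).tsum_eq G :)
  -- nonnegativity of symmetrized terms
  have hcross : ∀ m n : ℕ, m < n →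
      a m * b n < a n * b m ∧ y ^ m * x ^ n < x ^ m * y ^ n := by
    intro m n hmn
    constructor
    · have := hratio hmn
      simp only at this
      rwa [div_lt_div_iff₀ (hb m) (hb n)] at this
    · obtain ⟨k, rfl⟩ : ∃ k, n = m + k + 1 := ⟨n - m - 1, by omega⟩
      have hxk : x ^ (k + 1) < y ^ (k + 1) :=
        pow_lt_pow_left₀ hxy hx0.le (Nat.succ_ne_zero k)
      have hpos : 0 < x ^ m * y ^ m := mul_pos (pow_pos hx0 m) (pow_pos hy0 m)
      have : x ^ m * y ^ m * x ^ (k + 1) < x ^ m * y ^ m * y ^ (k + 1) :=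
        (mul_lt_mul_iff_right₀ hpos).2 hxk
      calc y ^ m * x ^ (m + k + 1) = x ^ m * y ^ m * x ^ (k + 1) := by ring
        _ < x ^ m * y ^ m * y ^ (k + 1) := this
        _ = x ^ m * y ^ (m + k + 1) := by ring
  have hH_eq : ∀ p : ℕ × ℕ, G p + G p.swap =
      (a p.1 * b p.2 - a p.2 * b p.1) * (y ^ p.1 * x ^ p.2 - x ^ p.1 * y ^ p.2) := by
    intro p
    simp only [hG, Prod.fst_swap, Prod.snd_swap]
    ring
  have hH_nonneg : ∀ p : ℕ × ℕ, 0 ≤ G p + G p.swap := by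
    intro ⟨m, n⟩
    rw [hH_eq]
    rcases lt_trichotomy m n with h | h | h
    · obtain ⟨h1, h2⟩ := hcross m n h
      have : 0 ≤ (a n * b m - a m * b n) * (x ^ m * y ^ n - y ^ m * x ^ n) :=
        mul_nonneg (by linarith) (by linarith)
      nlinarith
    · subst h; simp
    · obtain ⟨h1, h2⟩ := hcross n m h
      exact mul_nonneg (by simp only; linarith) (by simp only; linarith)
  have hH_pos : 0 < G (1, 0) + G ((1, 0) : ℕ × ℕ).swap := by
    rw [hH_eq]
    obtain ⟨h1, h2⟩ := hcross 0 1 Nat.zero_lt_one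
    exact mul_pos (by simp only; linarith) (by simp only; linarith)
  have hHsum : Summable (fun p : ℕ × ℕ => G p + G p.swap) := hGsum.add hGswap
  have hHpos : 0 < ∑' p : ℕ × ℕ, (G p + G p.swap) :=
    Summable.tsum_pos hHsum hH_nonneg (1, 0) hH_pos
  rw [Summable.tsum_add hGsum hGswap, hswap_eq] at hHpos
  linarith
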